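/- arXiv:2209.00075 — 3 statements merged into one kernel-verified Lean document; each statement's English description precedes it below -/
import Mathlib

section
/- Let D : ℝ^N → ℝ^{2N} be a linear map, M : ℝ be a nonnegative real number, and define G : ℝ^N → ℝ^N by G(h) = Dᵀ((|Dh|² − M²)⁺ · Dh), where (·)⁺ denotes the positive part and |·| the Euclidean norm. Then G is a monotone operator, i.e., ⟨G(h₁) − G(h₂), h₁ − h₂⟩ ≥ 0 for all h₁, h₂ ∈ ℝ^N. -/
open RealInnerProductSpace

lemma aux_key {E : Type*} [NormedAddCommGroup E] [InnerProductSpace ℝ E]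
    (M : ℝ) (u v : E) (huv : ‖v‖ ≤ ‖u‖) :
    0 ≤ ⟪(max (‖u‖ ^ 2 - M ^ 2) 0) • u - (max (‖v‖ ^ 2 - M ^ 2) 0) • v, u - v⟫ := by
  set a := max (‖u‖ ^ 2 - M ^ 2) 0 with ha'
  set b := max (‖v‖ ^ 2 - M ^ 2) 0 with hb'
  have ha : 0 ≤ a := le_max_right _ _
  have hb : 0 ≤ b := le_max_right _ _
  have hab : b ≤ a := by
    apply max_le_max _ le_rfl
    have : ‖v‖ ^ 2 ≤ ‖u‖ ^ 2 := by
      apply pow_le_pow_left₀ (norm_nonneg v) huv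
    linarith
  have hip : ⟪u, v⟫ ≤ ‖u‖ * ‖v‖ := real_inner_le_norm u v
  have hexp : ⟪a • u - b • v, u - v⟫
      = a * ‖u‖ ^ 2 + b * ‖v‖ ^ 2 - (a + b) * ⟪u, v⟫ := by
    simp [inner_sub_sub_self, inner_sub_left, inner_sub_right, inner_smul_left,
      inner_smul_right, real_inner_self_eq_norm_sq, real_inner_comm u v]
    ring
  rw [hexp]
  have hv : (0:ℝ) ≤ ‖v‖ := norm_nonneg v
  have hu : (0:ℝ) ≤ ‖u‖ := norm_nonneg u
  nlinarith [mul_nonneg (sub_nonneg.2 huv) (sub_nonneg.2 (mul_le_mul hab huv hv ha)),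
    mul_le_mul_of_nonneg_left hip (add_nonneg ha hb)]

lemma aux_key' {E : Type*} [NormedAddCommGroup E] [InnerProductSpace ℝ E]
    (M : ℝ) (u v : E) :
    0 ≤ ⟪(max (‖u‖ ^ 2 - M ^ 2) 0) • u - (max (‖v‖ ^ 2 - M ^ 2) 0) • v, u - v⟫ := by
  rcases le_total ‖v‖ ‖u‖ with h | h
  · exact aux_key M u v h
  · have := aux_key M v u h
    have hsw : ⟪(max (‖u‖ ^ 2 - M ^ 2) 0) • u - (max (‖v‖ ^ 2 - M ^ 2) 0) • v, u - v⟫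
        = ⟪(max (‖v‖ ^ 2 - M ^ 2) 0) • v - (max (‖u‖ ^ 2 - M ^ 2) 0) • u, v - u⟫ := by
      rw [← inner_neg_neg]
      simp
    rw [hsw]
    exact this

/-- monotonicity of `G h = Dᵀ((|Dh|² − M²)⁺ • Dh)`. -/
theorem stmt0 (N : ℕ)
    (D : EuclideanSpace ℝ (Fin N) →L[ℝ] EuclideanSpace ℝ (Fin (2 * N)))
    (M : ℝ) (hM : 0 ≤ M)
    (G : EuclideanSpace ℝ (Fin N) → EuclideanSpace ℝ (Fin N))
    (hG : ∀ h, G h =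
      ContinuousLinearMap.adjoint D ((max (‖D h‖ ^ 2 - M ^ 2) 0) • D h)) :
    ∀ h₁ h₂ : EuclideanSpace ℝ (Fin N), 0 ≤ ⟪G h₁ - G h₂, h₁ - h₂⟫ := by
  intro h₁ h₂
  rw [hG, hG, ← map_sub, ContinuousLinearMap.adjoint_inner_left, map_sub]
  exact aux_key' M (D h₁) (D h₂)
end

section
/- Let K ⊆ ℝ^N be closed and convex, let f : (0,T) → ℝ^N be integrable, and suppose y₁, y₂ : [0,T] → ℝ^N are absolutely continuous (with L² derivatives), take values in K, satisfy y₁(0) = y₂(0), and each yᵢ satisfies ⟨yᵢ'(t) − f(t), v − yᵢ(t)⟩ ≥ 0 for all v ∈ K and a.e. t. Then y₁ = y₂ on [0,T]. -/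
open RealInnerProductSpace MeasureTheory Filter Topology

/-- Auxiliary: a "square of the primitive" identity obtained via Fubini. -/
lemma key_sq {E : Type*} [NormedAddCommGroup E] [InnerProductSpace ℝ E] [CompleteSpace E]
    (t : ℝ) (G : ℝ → E) (hGsm : StronglyMeasurable G)
    (hGi : MeasureTheory.IntegrableOn G (Set.Ioc (0:ℝ) t)) :
    ‖∫ u in Set.Ioc (0:ℝ) t, G u‖ ^ 2
      = 2 * ∫ s in Set.Ioc (0:ℝ) t, ⟪G s, ∫ u in Set.Ioc (0:ℝ) s, G u⟫ := by
  set μ := volume.restrict (Set.Ioc (0:ℝ) t) with hμdef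
  have hGμ : Integrable G μ := hGi
  set w : ℝ → E := fun s => ∫ u in Set.Ioc (0:ℝ) s, G u with hwdef
  set W : E := ∫ u, G u ∂μ with hWdef
  set F : ℝ × ℝ → ℝ := fun p => ⟪G p.1, G p.2⟫ with hFdef
  set K₁ : ℝ × ℝ → ℝ := Set.indicator {p : ℝ × ℝ | p.2 ≤ p.1} F with hK₁def
  set K₂ : ℝ × ℝ → ℝ := Set.indicator {p : ℝ × ℝ | p.1 < p.2} F with hK₂def
  have hFmeas : AEStronglyMeasurable F (μ.prod μ) :=
    ((hGsm.comp_measurable measurable_fst).inner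
      (hGsm.comp_measurable measurable_snd)).aestronglyMeasurable
  have hFint : Integrable F (μ.prod μ) := by
    refine Integrable.mono' (hGμ.norm.mul_prod hGμ.norm) hFmeas ?_
    exact Eventually.of_forall fun p => norm_inner_le_norm _ _
  have hK₁int : Integrable K₁ (μ.prod μ) :=
    hFint.indicator (measurableSet_le measurable_snd measurable_fst)
  have hK₂int : Integrable K₂ (μ.prod μ) :=
    hFint.indicator (measurableSet_lt measurable_fst measurable_snd)
  -- slice descriptions
  have hK₁slice : ∀ s : ℝ, (fun u => K₁ (s, u))
      = Set.indicator (Set.Iic s) (fun u => ⟪G s, G u⟫) := by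
    intro s; ext u
    by_cases h : u ≤ s <;>
      simp [hK₁def, hFdef, Set.indicator_apply, h]
  have hK₂slice : ∀ s : ℝ, (fun u => K₂ (s, u))
      = Set.indicator (Set.Ioi s) (fun u => ⟪G s, G u⟫) := by
    intro s; ext u
    by_cases h : s < u <;>
      simp [hK₂def, hFdef, Set.indicator_apply, h, not_lt.mp]
  have hK₂slice' : ∀ u : ℝ, (fun s => K₂ (s, u))
      = Set.indicator (Set.Iio u) (fun s => ⟪G s, G u⟫) := by
    intro u; ext s
    by_cases h : s < u <;>
      simp [hK₂def, hFdef, Set.indicator_apply, h]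
  have hK₁slice_int : ∀ s : ℝ, Integrable (fun u => K₁ (s, u)) μ := by
    intro s; rw [hK₁slice s]
    exact (hGμ.const_inner (G s)).indicator measurableSet_Iic
  have hK₂slice_int : ∀ s : ℝ, Integrable (fun u => K₂ (s, u)) μ := by
    intro s; rw [hK₂slice s]
    exact (hGμ.const_inner (G s)).indicator measurableSet_Ioi
  -- the double integral identity
  have step1 : ‖W‖ ^ 2 = ∫ s, ∫ u, F (s, u) ∂μ ∂μ := by
    calc ‖W‖ ^ 2 = ⟪W, W⟫ := (real_inner_self_eq_norm_sq W).symm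
      _ = ∫ s, ⟪W, G s⟫ ∂μ := (integral_inner hGμ W).symm
      _ = ∫ s, ⟪G s, W⟫ ∂μ := by simp_rw [real_inner_comm]
      _ = ∫ s, ∫ u, F (s, u) ∂μ ∂μ := by
          refine integral_congr_ae (Eventually.of_forall fun s => ?_)
          exact (integral_inner hGμ (G s)).symm
  have step2 : ∫ s, ∫ u, F (s, u) ∂μ ∂μ
      = (∫ s, ∫ u, K₁ (s, u) ∂μ ∂μ) + ∫ s, ∫ u, K₂ (s, u) ∂μ ∂μ := by
    rw [← integral_add hK₁int.integral_prod_left hK₂int.integral_prod_left]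
    refine integral_congr_ae (Eventually.of_forall fun s => ?_)
    show ∫ u, F (s, u) ∂μ = ∫ u, K₁ (s, u) ∂μ + ∫ (u : ℝ), K₂ (s, u) ∂μ
    rw [← integral_add (hK₁slice_int s) (hK₂slice_int s)]
    refine integral_congr_ae (Eventually.of_forall fun u => ?_)
    by_cases h : u ≤ s
    · simp [hK₁def, hK₂def, Set.indicator_apply, h, not_lt.mpr h]
    · simp [hK₁def, hK₂def, Set.indicator_apply, h, lt_of_not_ge h]
  have hA : ∫ s, ∫ u, K₁ (s, u) ∂μ ∂μ = ∫ s, ⟪G s, w s⟫ ∂μ := by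
    refine integral_congr_ae ?_
    filter_upwards [ae_restrict_mem measurableSet_Ioc] with s hs
    rw [hK₁slice s, integral_indicator measurableSet_Iic, hμdef,
      Measure.restrict_restrict measurableSet_Iic]
    have hset : Set.Iic s ∩ Set.Ioc (0:ℝ) t = Set.Ioc (0:ℝ) s := by
      ext x
      simp only [Set.mem_inter_iff, Set.mem_Iic, Set.mem_Ioc]
      exact ⟨fun ⟨h1, h2, _⟩ => ⟨h2, h1⟩, fun ⟨h1, h2⟩ => ⟨h2, h1, h2.trans hs.2⟩⟩
    rw [hset]
    exact integral_inner (hGi.mono_set (Set.Ioc_subset_Ioc_right hs.2)) (G s)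
  have hB : ∫ s, ∫ u, K₂ (s, u) ∂μ ∂μ = ∫ s, ⟪G s, w s⟫ ∂μ := by
    have hswap : ∫ s, ∫ u, K₂ (s, u) ∂μ ∂μ = ∫ u, ∫ s, K₂ (s, u) ∂μ ∂μ :=
      integral_integral_swap (by exact hK₂int)
    rw [hswap]
    refine integral_congr_ae ?_
    filter_upwards [ae_restrict_mem measurableSet_Ioc] with u hu
    rw [hK₂slice' u, integral_indicator measurableSet_Iio, hμdef,
      Measure.restrict_restrict measurableSet_Iio]
    have hset : Set.Iio u ∩ Set.Ioc (0:ℝ) t = Set.Ioo (0:ℝ) u := by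
      ext x
      simp only [Set.mem_inter_iff, Set.mem_Iio, Set.mem_Ioc, Set.mem_Ioo]
      exact ⟨fun ⟨h1, h2, _⟩ => ⟨h2, h1⟩, fun ⟨h1, h2⟩ => ⟨h2, h1, h2.le.trans hu.2⟩⟩
    rw [hset, ← MeasureTheory.integral_Ioc_eq_integral_Ioo]
    simp_rw [real_inner_comm]
    exact integral_inner (hGi.mono_set (Set.Ioc_subset_Ioc_right hu.2)) (G u)
  calc ‖W‖ ^ 2 = (∫ s, ∫ u, K₁ (s, u) ∂μ ∂μ) + ∫ s, ∫ u, K₂ (s, u) ∂μ ∂μ := by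
        rw [step1, step2]
    _ = 2 * ∫ s, ⟪G s, w s⟫ ∂μ := by rw [hA, hB]; ring

/-- uniqueness of absolutely continuous solutions of the variational
inequality `⟨y'(t) − f(t), v − y(t)⟩ ≥ 0` over a closed convex set `K`, with the
same initial value. -/
theorem stmt4 (N : ℕ) (T : ℝ) (hT : 0 < T)
    (K : Set (EuclideanSpace ℝ (Fin N)))
    (hKne : K.Nonempty) (hKcl : IsClosed K) (hKcv : Convex ℝ K)
    (f y₁ y₂ g₁ g₂ : ℝ → EuclideanSpace ℝ (Fin N))
    (hf : IntervalIntegrable f volume 0 T)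
    (hg₁ : IntervalIntegrable g₁ volume 0 T)
    (hg₂ : IntervalIntegrable g₂ volume 0 T)
    (hg₁L2 : MemLp g₁ 2 (volume.restrict (Set.Ioc 0 T)))
    (hg₂L2 : MemLp g₂ 2 (volume.restrict (Set.Ioc 0 T)))
    (hy₁ : ∀ t ∈ Set.Icc (0 : ℝ) T, y₁ t = y₁ 0 + ∫ s in (0 : ℝ)..t, g₁ s)
    (hy₂ : ∀ t ∈ Set.Icc (0 : ℝ) T, y₂ t = y₂ 0 + ∫ s in (0 : ℝ)..t, g₂ s)
    (hmem₁ : ∀ t ∈ Set.Icc (0 : ℝ) T, y₁ t ∈ K)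
    (hmem₂ : ∀ t ∈ Set.Icc (0 : ℝ) T, y₂ t ∈ K)
    (h0 : y₁ 0 = y₂ 0)
    (hVI₁ : ∀ᵐ t ∂(volume.restrict (Set.Ioo (0 : ℝ) T)),
      ∀ v ∈ K, 0 ≤ ⟪g₁ t - f t, v - y₁ t⟫)
    (hVI₂ : ∀ᵐ t ∂(volume.restrict (Set.Ioo (0 : ℝ) T)),
      ∀ v ∈ K, 0 ≤ ⟪g₂ t - f t, v - y₂ t⟫) :
    ∀ t ∈ Set.Icc (0 : ℝ) T, y₁ t = y₂ t := by
  intro t ht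
  set g : ℝ → EuclideanSpace ℝ (Fin N) := fun s => g₁ s - g₂ s with hgdef
  have hg : IntervalIntegrable g volume 0 T := hg₁.sub hg₂
  have hgIoc : MeasureTheory.IntegrableOn g (Set.Ioc (0:ℝ) T) volume :=
    (intervalIntegrable_iff_integrableOn_Ioc_of_le hT.le).mp hg
  set G : ℝ → EuclideanSpace ℝ (Fin N) := hgIoc.aestronglyMeasurable.mk g with hGdef
  have hGsm : StronglyMeasurable G := hgIoc.aestronglyMeasurable.stronglyMeasurable_mk
  have hgG : g =ᵐ[volume.restrict (Set.Ioc (0:ℝ) T)] G :=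
    hgIoc.aestronglyMeasurable.ae_eq_mk
  have hGIoc : MeasureTheory.IntegrableOn G (Set.Ioc (0:ℝ) T) volume := hgIoc.congr hgG
  have hGi : MeasureTheory.IntegrableOn G (Set.Ioc (0:ℝ) t) volume :=
    hGIoc.mono_set (Set.Ioc_subset_Ioc_right ht.2)
  -- the difference is the primitive of G
  have hw : ∀ s ∈ Set.Icc (0:ℝ) T, y₁ s - y₂ s = ∫ u in Set.Ioc (0:ℝ) s, G u := by
    intro s hs
    have hsub' : Set.uIcc (0:ℝ) s ⊆ Set.uIcc (0:ℝ) T := by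
      rw [Set.uIcc_of_le hs.1, Set.uIcc_of_le hT.le]
      exact Set.Icc_subset_Icc_right hs.2
    have hI₁ : IntervalIntegrable g₁ volume 0 s := hg₁.mono_set hsub'
    have hI₂ : IntervalIntegrable g₂ volume 0 s := hg₂.mono_set hsub'
    have e1 : y₁ s - y₂ s = ∫ u in (0:ℝ)..s, g u := by
      rw [hy₁ s hs, hy₂ s hs, h0, hgdef]
      rw [intervalIntegral.integral_sub hI₁ hI₂]
      abel
    rw [e1, intervalIntegral.integral_of_le hs.1]
    refine integral_congr_ae ?_
    exact ae_restrict_of_ae_restrict_of_subset (Set.Ioc_subset_Ioc_right hs.2) hgG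
  -- the key identity
  have hkey := key_sq t G hGsm hGi
  have hWt : ∫ u in Set.Ioc (0:ℝ) t, G u = y₁ t - y₂ t := (hw t ht).symm
  -- the integrand is a.e. nonpositive
  have hnonpos : ∀ᵐ s ∂(volume.restrict (Set.Ioc (0:ℝ) t)),
      ⟪G s, ∫ u in Set.Ioc (0:ℝ) s, G u⟫ ≤ 0 := by
    rw [Measure.restrict_congr_set Ioo_ae_eq_Ioc.symm]
    have hsub : Set.Ioo (0:ℝ) t ⊆ Set.Ioo (0:ℝ) T := Set.Ioo_subset_Ioo_right ht.2
    have h1 := ae_restrict_of_ae_restrict_of_subset hsub hVI₁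
    have h2 := ae_restrict_of_ae_restrict_of_subset hsub hVI₂
    have h3 : ∀ᵐ s ∂(volume.restrict (Set.Ioo (0:ℝ) t)), g s = G s :=
      ae_restrict_of_ae_restrict_of_subset
        (Set.Ioo_subset_Ioc_self.trans (Set.Ioc_subset_Ioc_right ht.2)) hgG
    filter_upwards [h1, h2, h3, ae_restrict_mem measurableSet_Ioo] with s hs1 hs2 hs3 hs4
    have hsIcc : s ∈ Set.Icc (0:ℝ) T := ⟨hs4.1.le, (hs4.2.le.trans ht.2)⟩
    have hws : ∫ u in Set.Ioc (0:ℝ) s, G u = y₁ s - y₂ s := (hw s hsIcc).symm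
    rw [hws]
    have hv1 := hs1 (y₂ s) (hmem₂ s hsIcc)
    have hv2 := hs2 (y₁ s) (hmem₁ s hsIcc)
    have hGg : ⟪G s, y₁ s - y₂ s⟫ = ⟪g₁ s - g₂ s, y₁ s - y₂ s⟫ := by
      rw [← hs3]
    rw [hGg]
    have e2 : ⟪g₁ s - g₂ s, y₁ s - y₂ s⟫
        = ⟪g₁ s - f s, y₁ s - y₂ s⟫ - ⟪g₂ s - f s, y₁ s - y₂ s⟫ := by
      rw [← inner_sub_left, sub_sub_sub_cancel_right]
    have e3 : ⟪g₁ s - f s, y₂ s - y₁ s⟫ = -⟪g₁ s - f s, y₁ s - y₂ s⟫ := by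
      rw [← neg_sub (y₁ s) (y₂ s), inner_neg_right]
    rw [e3] at hv1
    linarith [e2 ▸ (by linarith : ⟪g₁ s - f s, y₁ s - y₂ s⟫
      - ⟪g₂ s - f s, y₁ s - y₂ s⟫ ≤ 0)]
  have hint_le : ∫ s in Set.Ioc (0:ℝ) t, ⟪G s, ∫ u in Set.Ioc (0:ℝ) s, G u⟫ ≤ 0 :=
    integral_nonpos_of_ae hnonpos
  have hsq : ‖y₁ t - y₂ t‖ ^ 2 ≤ 0 := by
    rw [← hWt, hkey]; linarith
  have : ‖y₁ t - y₂ t‖ = 0 := by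
    nlinarith [norm_nonneg (y₁ t - y₂ t), sq_nonneg (‖y₁ t - y₂ t‖)]
  have := norm_eq_zero.mp this
  exact sub_eq_zero.mp this
end

section
/- In the setting of the Leray–Schauder fixed point argument: if y ∈ C([0,T]; ℝ^N) is absolutely continuous with y(0) = λ y₀ and y'(t) = λ f(t) − γλ F(y(t)) a.e. for some λ ∈ (0,1), where ⟨F(h), h⟩ ≥ 0 for all h, then sup_{t∈[0,T]} ‖y(t)‖ ≤ ‖y₀‖ + ∫₀ᵀ ‖f(s)‖ ds. In particular, the set of all such fixed-point candidates y = λΛ(y), λ ∈ (0,1), is bounded in C([0,T]; ℝ^N) uniformly in λ and γ. -/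
open RealInnerProductSpace MeasureTheory Filter Topology

set_option maxHeartbeats 1000000

/-- Leray–Schauder a priori bound: any solution of
`y(0) = λ y₀`, `y' = λ f − γ λ F(y)` with `λ ∈ (0,1)` and `⟨F(h),h⟩ ≥ 0` satisfies
`sup_{[0,T]} ‖y‖ ≤ ‖y₀‖ + ∫₀ᵀ ‖f‖`, uniformly in `λ` and `γ`. -/
theorem stmt18 (N : ℕ) (T γ lam : ℝ) (hT : 0 < T) (hγ : 0 < γ)
    (hlam : lam ∈ Set.Ioo (0 : ℝ) 1)
    (F : EuclideanSpace ℝ (Fin N) → EuclideanSpace ℝ (Fin N))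
    (hFc : Continuous F)
    (hFpos : ∀ h, 0 ≤ ⟪F h, h⟫)
    (f : ℝ → EuclideanSpace ℝ (Fin N))
    (hfi : IntervalIntegrable f volume 0 T)
    (hfn : IntervalIntegrable (fun s => ‖f s‖) volume 0 T)
    (y₀ : EuclideanSpace ℝ (Fin N)) (y : ℝ → EuclideanSpace ℝ (Fin N))
    (hyc : Continuous y)
    (hy : ∀ t ∈ Set.Icc (0 : ℝ) T,
      y t = lam • y₀ + ∫ s in (0 : ℝ)..t, (lam • f s - (γ * lam) • F (y s))) :
    ∀ t ∈ Set.Icc (0 : ℝ) T, ‖y t‖ ≤ ‖y₀‖ + ∫ s in (0 : ℝ)..T, ‖f s‖ := by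
  obtain ⟨hl0, hl1⟩ := hlam
  have hIccT : Set.uIcc (0:ℝ) T = Set.Icc 0 T := Set.uIcc_of_le hT.le
  set g : ℝ → EuclideanSpace ℝ (Fin N) := fun s => lam • f s - (γ * lam) • F (y s) with hgdef
  have hsub : ∀ a b : ℝ, a ∈ Set.Icc (0:ℝ) T → b ∈ Set.Icc (0:ℝ) T →
      Set.uIcc a b ⊆ Set.uIcc (0:ℝ) T := fun a b ha hb =>
    Set.uIcc_subset_uIcc (by rw [hIccT]; exact ha) (by rw [hIccT]; exact hb)
  have hgi : ∀ a b : ℝ, a ∈ Set.Icc (0:ℝ) T → b ∈ Set.Icc (0:ℝ) T →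
      IntervalIntegrable g volume a b := by
    intro a b ha hb
    have h1 : IntervalIntegrable (fun s => lam • f s) volume a b :=
      (hfi.mono_set (hsub a b ha hb)).smul lam
    have h2 : IntervalIntegrable (fun s => (γ * lam) • F (y s)) volume a b :=
      ((hFc.comp hyc).const_smul (γ * lam)).intervalIntegrable a b
    exact h1.sub h2
  have hfni : ∀ a b : ℝ, a ∈ Set.Icc (0:ℝ) T → b ∈ Set.Icc (0:ℝ) T →
      IntervalIntegrable (fun s => ‖f s‖) volume a b := fun a b ha hb =>
    hfn.mono_set (hsub a b ha hb)
  have ydiff : ∀ a ∈ Set.Icc (0:ℝ) T, ∀ b ∈ Set.Icc (0:ℝ) T,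
      y b - y a = ∫ s in a..b, g s := by
    intro a ha b hb
    rw [hy a ha, hy b hb, add_sub_add_left_eq_sub,
      intervalIntegral.integral_interval_sub_left
        (hgi 0 b (Set.left_mem_Icc.2 hT.le) hb) (hgi 0 a (Set.left_mem_Icc.2 hT.le) ha)]
  obtain ⟨C₀, hC₀⟩ := (isCompact_Icc : IsCompact (Set.Icc (0:ℝ) T)).exists_bound_of_continuousOn
    (hFc.comp hyc).continuousOn
  set Cb := max C₀ 0 with hCbdef
  have hCb : ∀ s ∈ Set.Icc (0:ℝ) T, ‖F (y s)‖ ≤ Cb := fun s hs =>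
    (hC₀ s hs).trans (le_max_left _ _)
  set K := γ * lam * Cb with hKdef
  have hK : 0 ≤ K := by
    have : (0:ℝ) ≤ Cb := le_max_right _ _
    positivity
  set G : ℝ → ℝ := fun t => ∫ s in (0:ℝ)..t, ‖f s‖ with hGdef
  have hGc : ContinuousOn G (Set.Icc 0 T) := by
    have := intervalIntegral.continuousOn_primitive_interval' hfn
      (Set.left_mem_uIcc : (0:ℝ) ∈ Set.uIcc (0:ℝ) T)
    rwa [hIccT] at this
  have hGdiffi : ∀ a ∈ Set.Icc (0:ℝ) T, ∀ b ∈ Set.Icc (0:ℝ) T,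
      G b - G a = ∫ s in a..b, ‖f s‖ := by
    intro a ha b hb
    exact intervalIntegral.integral_interval_sub_left
      (hfni 0 b (Set.left_mem_Icc.2 hT.le) hb) (hfni 0 a (Set.left_mem_Icc.2 hT.le) ha)
  have hGmono : ∀ a ∈ Set.Icc (0:ℝ) T, ∀ b ∈ Set.Icc (0:ℝ) T, a ≤ b → G a ≤ G b := by
    intro a ha b hb hab
    have h1 := hGdiffi a ha b hb
    have h2 : 0 ≤ ∫ s in a..b, ‖f s‖ :=
      intervalIntegral.integral_nonneg hab (fun u _ => norm_nonneg _)
    linarith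
  -- The key one-step estimate
  have step : ∀ ε : ℝ, 0 < ε → ∀ δ : ℝ, 0 < δ → ∀ x ∈ Set.Icc (0:ℝ) T, ∀ t ∈ Set.Icc (0:ℝ) T,
      x ≤ t → ∀ η : ℝ, 0 ≤ η → (∀ s ∈ Set.Icc x t, ‖y s - y x‖ ≤ η) →
      lam * (G t - G x) + 2 * K * (t - x) ≤ 2 * (Real.sqrt (‖y x‖^2 + ε) - ‖y x‖) →
      2 * K * η + K^2 * (t - x) ≤ 2 * Real.sqrt ε * δ →
      Real.sqrt (‖y t‖^2 + ε) ≤ Real.sqrt (‖y x‖^2 + ε) + lam * (G t - G x) + δ * (t - x) := by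
    intro ε hε δ hδ x hx t ht hxt η hη hηs hA hB
    have hIint : G t - G x = ∫ s in x..t, ‖f s‖ := hGdiffi x hx t ht
    have hI0 : 0 ≤ G t - G x := by
      rw [hIint]; exact intervalIntegral.integral_nonneg hxt (fun u _ => norm_nonneg _)
    have hΔ0 : (0:ℝ) ≤ t - x := sub_nonneg.2 hxt
    have hxs : ∀ s ∈ Set.Icc x t, s ∈ Set.Icc (0:ℝ) T := fun s hs =>
      ⟨hx.1.trans hs.1, hs.2.trans ht.2⟩
    have hv : y t - y x = ∫ s in x..t, g s := ydiff x hx t ht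
    have hgixt := hgi x t hx ht
    -- norm bound
    have hvn : ‖y t - y x‖ ≤ lam * (G t - G x) + K * (t - x) := by
      rw [hv]
      calc ‖∫ s in x..t, g s‖ ≤ ∫ s in x..t, ‖g s‖ :=
            intervalIntegral.norm_integral_le_integral_norm hxt
        _ ≤ ∫ s in x..t, (lam * ‖f s‖ + K) := by
            apply intervalIntegral.integral_mono_on hxt hgixt.norm
              (((hfni x t hx ht).const_mul lam).add intervalIntegrable_const)
            intro s hs
            have h1 : ‖g s‖ ≤ ‖lam • f s‖ + ‖(γ * lam) • F (y s)‖ := norm_sub_le _ _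
            rw [norm_smul, norm_smul, Real.norm_eq_abs, Real.norm_eq_abs, abs_of_pos hl0,
              abs_of_pos (by positivity : (0:ℝ) < γ * lam)] at h1
            have h2 := hCb s (hxs s hs)
            have h3 : γ * lam * ‖F (y s)‖ ≤ K := by
              rw [hKdef]
              have := mul_le_mul_of_nonneg_left h2 (by positivity : (0:ℝ) ≤ γ * lam)
              linarith [this]
            linarith
        _ = lam * (G t - G x) + K * (t - x) := by
            rw [intervalIntegral.integral_add ((hfni x t hx ht).const_mul lam)
              intervalIntegrable_const, intervalIntegral.integral_const_mul, ← hIint,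
              intervalIntegral.integral_const, smul_eq_mul]
            ring
    -- inner product bound
    have hinner : ⟪y x, y t - y x⟫ ≤ lam * ‖y x‖ * (G t - G x) + K * η * (t - x) := by
      have hcomm : ⟪y x, y t - y x⟫ = ∫ s in x..t, ⟪y x, g s⟫ := by
        rw [hv]
        exact ((innerSL ℝ (y x)).intervalIntegral_comp_comm hgixt).symm
      rw [hcomm]
      have hlint : IntervalIntegrable (fun s => ⟪y x, g s⟫) volume x t :=
        ⟨(innerSL ℝ (y x)).integrable_comp hgixt.1, (innerSL ℝ (y x)).integrable_comp hgixt.2⟩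
      calc (∫ s in x..t, ⟪y x, g s⟫)
          ≤ ∫ s in x..t, ((lam * ‖y x‖) * ‖f s‖ + K * η) := by
            apply intervalIntegral.integral_mono_on hxt hlint
              (((hfni x t hx ht).const_mul (lam * ‖y x‖)).add intervalIntegrable_const)
            intro s hs
            have hsplit : ⟪y x, g s⟫ = lam * ⟪y x, f s⟫ - (γ * lam) * ⟪y x, F (y s)⟫ := by
              simp only [hgdef, inner_sub_right, real_inner_smul_right]
            have h1 : ⟪y x, f s⟫ ≤ ‖y x‖ * ‖f s‖ := real_inner_le_norm _ _
            have hkey : -⟪y x, F (y s)⟫ ≤ ‖F (y s)‖ * η := by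
              have e1 : ⟪y x, F (y s)⟫ = ⟪F (y s), y s⟫ - ⟪F (y s), y s - y x⟫ := by
                rw [real_inner_comm, inner_sub_right]; ring
              have e2 : ⟪F (y s), y s - y x⟫ ≤ ‖F (y s)‖ * ‖y s - y x‖ := real_inner_le_norm _ _
              have e3 := hFpos (y s)
              have e4 : ‖F (y s)‖ * ‖y s - y x‖ ≤ ‖F (y s)‖ * η :=
                mul_le_mul_of_nonneg_left (hηs s hs) (norm_nonneg _)
              linarith
            have hFC := hCb s (hxs s hs)
            have h5 : lam * ⟪y x, f s⟫ ≤ lam * (‖y x‖ * ‖f s‖) :=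
              mul_le_mul_of_nonneg_left h1 hl0.le
            have h6 : (γ * lam) * (-⟪y x, F (y s)⟫) ≤ (γ * lam) * (‖F (y s)‖ * η) :=
              mul_le_mul_of_nonneg_left hkey (by positivity)
            have h7 : (γ * lam) * (‖F (y s)‖ * η) ≤ K * η := by
              rw [hKdef]
              have h8 := mul_le_mul_of_nonneg_right hFC hη
              have h9 := mul_le_mul_of_nonneg_left h8 (by positivity : (0:ℝ) ≤ γ * lam)
              nlinarith [h9]
            rw [hsplit]; nlinarith [h5, h6, h7]
        _ = lam * ‖y x‖ * (G t - G x) + K * η * (t - x) := by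
            rw [intervalIntegral.integral_add ((hfni x t hx ht).const_mul (lam * ‖y x‖))
              intervalIntegrable_const, intervalIntegral.integral_const_mul, ← hIint,
              intervalIntegral.integral_const, smul_eq_mul]
            ring
    -- squared norm identity
    have hsq : ‖y t‖^2 = ‖y x‖^2 + 2 * ⟪y x, y t - y x⟫ + ‖y t - y x‖^2 := by
      have h := norm_add_sq_real (y x) (y t - y x)
      rw [show y x + (y t - y x) = y t by abel] at h
      exact h
    have hS2 : Real.sqrt (‖y x‖^2 + ε) ^ 2 = ‖y x‖^2 + ε := Real.sq_sqrt (by positivity)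
    have hSε : Real.sqrt ε ≤ Real.sqrt (‖y x‖^2 + ε) :=
      Real.sqrt_le_sqrt (by nlinarith [sq_nonneg ‖y x‖])
    have hSx : ‖y x‖ ≤ Real.sqrt (‖y x‖^2 + ε) := by
      rw [Real.le_sqrt (norm_nonneg _) (by positivity)]; linarith
    have hsε : (0:ℝ) ≤ Real.sqrt ε := Real.sqrt_nonneg _
    apply Real.sqrt_le_iff.2
    constructor
    · have h1 : 0 ≤ Real.sqrt (‖y x‖^2 + ε) := Real.sqrt_nonneg _
      have h2 : 0 ≤ lam * (G t - G x) := mul_nonneg hl0.le hI0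
      have h3 : 0 ≤ δ * (t - x) := mul_nonneg hδ.le hΔ0
      linarith
    · have e1 : lam * (G t - G x) * (lam * (G t - G x) + 2 * K * (t - x)) ≤
          lam * (G t - G x) * (2 * (Real.sqrt (‖y x‖^2 + ε) - ‖y x‖)) :=
        mul_le_mul_of_nonneg_left hA (mul_nonneg hl0.le hI0)
      have e2 : (t - x) * (2 * K * η + K^2 * (t - x)) ≤ (t - x) * (2 * Real.sqrt ε * δ) :=
        mul_le_mul_of_nonneg_left hB hΔ0
      have e3 : (t - x) * (2 * Real.sqrt ε * δ) ≤
          (t - x) * (2 * Real.sqrt (‖y x‖^2 + ε) * δ) := by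
        apply mul_le_mul_of_nonneg_left _ hΔ0
        nlinarith
      have esq : ‖y t - y x‖^2 ≤ (lam * (G t - G x) + K * (t - x))^2 := by
        nlinarith [norm_nonneg (y t - y x), hvn]
      have h8 : (0:ℝ) ≤ (δ * (t - x))^2 := sq_nonneg _
      have h9 : (0:ℝ) ≤ (lam * (G t - G x)) * (δ * (t - x)) :=
        mul_nonneg (mul_nonneg hl0.le hI0) (mul_nonneg hδ.le hΔ0)
      have h10 : (0:ℝ) ≤ (lam * (G t - G x))^2 := sq_nonneg _
      linarith [hsq, hS2, hinner, esq, e1, e2, e3, h8, h9, h10]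
  -- continuous induction
  have main : ∀ ε : ℝ, 0 < ε → ∀ δ : ℝ, 0 < δ → ∀ t ∈ Set.Icc (0:ℝ) T,
      Real.sqrt (‖y t‖^2 + ε) ≤ Real.sqrt (‖y 0‖^2 + ε) + lam * G t + δ * t := by
    intro ε hε δ hδ
    have hsε : 0 < Real.sqrt ε := Real.sqrt_pos.2 hε
    suffices hss : Set.Icc (0:ℝ) T ⊆ {t : ℝ | Real.sqrt (‖y t‖^2 + ε) ≤
        Real.sqrt (‖y 0‖^2 + ε) + lam * G t + δ * t} by
      intro t ht; exact hss ht
    apply IsClosed.Icc_subset_of_forall_exists_gt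
    · -- closedness
      have hφc : ContinuousOn (fun t => Real.sqrt (‖y t‖^2 + ε) -
          (Real.sqrt (‖y 0‖^2 + ε) + lam * G t + δ * t)) (Set.Icc 0 T) := by
        apply ContinuousOn.sub
        · exact (Real.continuous_sqrt.comp ((hyc.norm.pow 2).add continuous_const)).continuousOn
        · exact (continuousOn_const.add (continuousOn_const.mul hGc)).add
            (continuous_const.mul continuous_id).continuousOn
      have heq : {t : ℝ | Real.sqrt (‖y t‖^2 + ε) ≤
            Real.sqrt (‖y 0‖^2 + ε) + lam * G t + δ * t} ∩ Set.Icc 0 T =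
          Set.Icc (0:ℝ) T ∩ (fun t => Real.sqrt (‖y t‖^2 + ε) -
            (Real.sqrt (‖y 0‖^2 + ε) + lam * G t + δ * t)) ⁻¹' Set.Iic 0 := by
        ext u
        simp only [Set.mem_inter_iff, Set.mem_setOf_eq, Set.mem_preimage, Set.mem_Iic,
          sub_nonpos, and_comm]
      rw [heq]
      exact hφc.preimage_isClosed_of_isClosed isClosed_Icc isClosed_Iic
    · -- 0 ∈ s
      have hG0 : G 0 = 0 := intervalIntegral.integral_same
      simp only [Set.mem_setOf_eq, hG0]
      norm_num
    · -- the induction step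
      intro x hx z hz
      have hxs := hx.1
      have hx0 := hx.2.1
      have hxT := hx.2.2
      have hxmem : x ∈ Set.Icc (0:ℝ) T := ⟨hx0, hxT.le⟩
      have hSx : ‖y x‖ < Real.sqrt (‖y x‖^2 + ε) :=
        (Real.lt_sqrt (norm_nonneg _)).2 (by linarith)
      set c₀ : ℝ := 2 * (Real.sqrt (‖y x‖^2 + ε) - ‖y x‖) with hc₀
      have hc₀pos : 0 < c₀ := by rw [hc₀]; linarith
      set η : ℝ := Real.sqrt ε * δ / (2 * K + 1) with hηdef
      have hηpos : 0 < η := div_pos (mul_pos hsε hδ) (by linarith)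
      obtain ⟨h₁, h₁pos, hball₁⟩ : ∃ h₁ > 0, ∀ s : ℝ, |s - x| < h₁ → ‖y s - y x‖ < η := by
        obtain ⟨d, dpos, hd⟩ := Metric.continuous_iff.1 hyc x η hηpos
        exact ⟨d, dpos, fun s hs => by
          have := hd s (by simpa [Real.dist_eq] using hs)
          simpa [dist_eq_norm] using this⟩
      obtain ⟨h₂, h₂pos, hball₂⟩ : ∃ h₂ > 0, ∀ s ∈ Set.Icc (0:ℝ) T, |s - x| < h₂ →
          |G s - G x| < c₀ / 4 := by
        have hcw : ContinuousWithinAt G (Set.Icc 0 T) x := hGc x hxmem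
        obtain ⟨d, dpos, hd⟩ := Metric.continuousWithinAt_iff.1 hcw (c₀/4) (by linarith)
        refine ⟨d, dpos, fun s hs hds => ?_⟩
        have := hd hs (by simpa [Real.dist_eq] using hds)
        simpa [Real.dist_eq] using this
      set h₃ : ℝ := min (min (h₁/2) (h₂/2)) (min (c₀ / (4*K+1)) (Real.sqrt ε * δ / (K^2+1)))
        with hh₃def
      have h₃pos : 0 < h₃ := by
        apply lt_min (lt_min (by linarith) (by linarith))
        apply lt_min (div_pos hc₀pos (by linarith)) (div_pos (mul_pos hsε hδ) (by positivity))
      have hh₃a : h₃ ≤ h₁/2 := (min_le_left _ _).trans (min_le_left _ _)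
      have hh₃b : h₃ ≤ h₂/2 := (min_le_left _ _).trans (min_le_right _ _)
      have hh₃c : h₃ ≤ c₀ / (4*K+1) := (min_le_right _ _).trans (min_le_left _ _)
      have hh₃d : h₃ ≤ Real.sqrt ε * δ / (K^2+1) := (min_le_right _ _).trans (min_le_right _ _)
      set w : ℝ := min z (min T (x + h₃)) with hwdef
      have hwx : x < w := lt_min hz (lt_min hxT (by linarith))
      have hwT : w ≤ T := (min_le_right _ _).trans (min_le_left _ _)
      have hwmem : w ∈ Set.Icc (0:ℝ) T := ⟨hx0.trans hwx.le, hwT⟩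
      have hwz : w ≤ z := min_le_left _ _
      have hΔle : w - x ≤ h₃ := by
        have : w ≤ x + h₃ := (min_le_right _ _).trans (min_le_right _ _)
        linarith
      have hηs : ∀ s ∈ Set.Icc x w, ‖y s - y x‖ ≤ η := by
        intro s hs
        apply le_of_lt
        apply hball₁
        rw [abs_of_nonneg (by linarith [hs.1])]
        have : s ≤ w := hs.2
        linarith
      have hIlt : |G w - G x| < c₀ / 4 := by
        apply hball₂ w hwmem
        rw [abs_of_nonneg (by linarith)]
        linarith
      have hI0 : 0 ≤ G w - G x := by
        have := hGmono x hxmem w hwmem hwx.le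
        linarith
      have hA : lam * (G w - G x) + 2 * K * (w - x) ≤
          2 * (Real.sqrt (‖y x‖^2 + ε) - ‖y x‖) := by
        have h1 : lam * (G w - G x) ≤ G w - G x := by nlinarith
        have h2 : G w - G x < c₀ / 4 := by
          have := abs_lt.1 hIlt; exact this.2
        have h3 : 2 * K * (w - x) ≤ 2 * K * (c₀ / (4*K+1)) := by
          apply mul_le_mul_of_nonneg_left _ (by linarith)
          linarith
        have h4 : 2 * K * (c₀ / (4*K+1)) ≤ c₀ / 2 := by
          rw [← mul_div_assoc, div_le_div_iff₀ (by linarith : (0:ℝ) < 4*K+1)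
            (by norm_num : (0:ℝ) < 2)]
          nlinarith [mul_nonneg hK hc₀pos.le]
        have hfin : lam * (G w - G x) + 2 * K * (w - x) ≤ c₀ := by linarith
        rw [hc₀] at hfin
        exact hfin
      have hB : 2 * K * η + K^2 * (w - x) ≤ 2 * Real.sqrt ε * δ := by
        have h1 : 2 * K * η ≤ Real.sqrt ε * δ := by
          rw [hηdef, mul_div_assoc', div_le_iff₀ (by linarith : (0:ℝ) < 2*K+1)]
          nlinarith [mul_pos hsε hδ]
        have h2 : K^2 * (w - x) ≤ K^2 * (Real.sqrt ε * δ / (K^2+1)) := by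
          apply mul_le_mul_of_nonneg_left _ (sq_nonneg _)
          linarith
        have h3 : K^2 * (Real.sqrt ε * δ / (K^2+1)) ≤ Real.sqrt ε * δ := by
          rw [mul_div_assoc', div_le_iff₀ (by positivity : (0:ℝ) < K^2+1)]
          nlinarith [mul_pos hsε hδ, sq_nonneg K]
        linarith
      have hstep := step ε hε δ hδ x hxmem w hwmem hwx.le η hηpos.le hηs hA hB
      refine ⟨w, ?_, hwx, hwz⟩
      have hxform : Real.sqrt (‖y x‖^2 + ε) ≤ Real.sqrt (‖y 0‖^2 + ε) + lam * G x + δ * x := hxs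
      simp only [Set.mem_setOf_eq]
      have hexp : lam * (G w - G x) = lam * G w - lam * G x := by ring
      linarith [hstep, hxform, hexp]
  -- conclusion
  intro t ht
  have hy0 : ‖y 0‖ = lam * ‖y₀‖ := by
    have h0 := hy 0 (Set.left_mem_Icc.2 hT.le)
    rw [intervalIntegral.integral_same, add_zero] at h0
    rw [h0, norm_smul, Real.norm_eq_abs, abs_of_pos hl0]
  have hGt0 : 0 ≤ G t := intervalIntegral.integral_nonneg ht.1 (fun u _ => norm_nonneg _)
  have hGtT : G t ≤ G T := hGmono t ht T (Set.right_mem_Icc.2 hT.le) ht.2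
  have hgoal : (∫ s in (0:ℝ)..T, ‖f s‖) = G T := rfl
  rw [hgoal]
  apply le_of_forall_pos_lt_add
  intro ρ hρ
  have hε : (0:ℝ) < (ρ/4)^2 := by positivity
  have hδ : (0:ℝ) < ρ / (4*T) := by positivity
  have hm := main ((ρ/4)^2) hε (ρ/(4*T)) hδ t ht
  have hsq : Real.sqrt ((ρ/4)^2) = ρ/4 := Real.sqrt_sq (by linarith)
  have h1 : ‖y t‖ ≤ Real.sqrt (‖y t‖^2 + (ρ/4)^2) := by
    rw [Real.le_sqrt (norm_nonneg _) (by positivity)]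
    nlinarith
  have h2 : Real.sqrt (‖y 0‖^2 + (ρ/4)^2) ≤ ‖y 0‖ + ρ/4 := by
    apply Real.sqrt_le_iff.2
    constructor
    · positivity
    · nlinarith [norm_nonneg (y 0)]
  have h3 : ρ/(4*T) * t ≤ ρ/4 := by
    have ht2 : t ≤ T := ht.2
    rw [div_mul_eq_mul_div, div_le_div_iff₀ (by linarith) (by linarith : (0:ℝ) < 4)]
    nlinarith
  have h4 : lam * G t ≤ G T := by
    have h41 : lam * G t ≤ 1 * G t := mul_le_mul_of_nonneg_right hl1.le hGt0
    rw [one_mul] at h41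
    exact h41.trans hGtT
  have h5 : lam * ‖y₀‖ ≤ ‖y₀‖ := by
    have h51 : lam * ‖y₀‖ ≤ 1 * ‖y₀‖ := mul_le_mul_of_nonneg_right hl1.le (norm_nonneg _)
    rwa [one_mul] at h51
  linarith [hy0]
end
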